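/- If π(x) = π̂(x) for all x (correct propensity model), then the DR pseudo-outcome satisfies E[Ỹ_DR | X=x] = τ(x) for all x, regardless of μ̂0, μ̂1. -/

import Mathlib

open MeasureTheory

/-- Double robustness, propensity half: if the propensity estimate is exact
(`pih = pi`), the DR pseudo-outcome is conditionally unbiased for CATE
regardless of the outcome estimates `mu0h`, `mu1h`. -/
theorem dr_pseudo_outcome_unbiased_of_correct_propensity {X Ω : Type*} [MeasurableSpace Ω]
    (κ : X → Measure Ω) (hκ : ∀ x, IsProbabilityMeasure (κ x))
    (W Y : Ω → ℝ) (pi pih mu0 mu1 tau : X → ℝ)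
    (hW : ∀ ω, W ω = 0 ∨ W ω = 1)
    (hIntW : ∀ x, Integrable W (κ x))
    (hIntY : ∀ x, Integrable Y (κ x))
    (hIntWY : ∀ x, Integrable (fun ω => W ω * Y ω) (κ x))
    (hpi : ∀ x, ∫ ω, W ω ∂(κ x) = pi x)
    (hY1 : ∀ x, ∫ ω, W ω * Y ω ∂(κ x) = pi x * mu1 x)
    (hY0 : ∀ x, ∫ ω, (1 - W ω) * Y ω ∂(κ x) = (1 - pi x) * mu0 x)
    (htau : ∀ x, tau x = mu1 x - mu0 x)
    (hpih : ∀ x, 0 < pih x ∧ pih x < 1)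
    (hcorrect : ∀ x, pih x = pi x) :
    ∀ (mu0h mu1h : X → ℝ) (x : X),
      (∫ ω, ((W ω / pih x - (1 - W ω) / (1 - pih x)) * Y ω
          + (1 - W ω / pih x) * mu1h x
          - (1 - (1 - W ω) / (1 - pih x)) * mu0h x) ∂(κ x)) = tau x := by
  intro mu0h mu1h x
  haveI := hκ x
  obtain ⟨hp0, hp1⟩ := hpih x
  have hpne : pih x ≠ 0 := ne_of_gt hp0
  have hpne1 : (1 : ℝ) - pih x ≠ 0 := sub_ne_zero.mpr (ne_of_gt hp1)
  set a : ℝ := 1 / pih x + 1 / (1 - pih x) with ha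
  set b : ℝ := -(1 / (1 - pih x)) with hb
  set c : ℝ := -(mu1h x / pih x) - mu0h x / (1 - pih x) with hc
  set d : ℝ := mu1h x - mu0h x + mu0h x / (1 - pih x) with hd
  have key : (fun ω => ((W ω / pih x - (1 - W ω) / (1 - pih x)) * Y ω
          + (1 - W ω / pih x) * mu1h x
          - (1 - (1 - W ω) / (1 - pih x)) * mu0h x))
      = fun ω => a * (W ω * Y ω) + (b * Y ω + (c * W ω + d)) := by
    funext ω
    rw [ha, hb, hc, hd]
    field_simp
    ring
  rw [key]
  have h1 : Integrable (fun ω => a * (W ω * Y ω)) (κ x) := (hIntWY x).const_mul a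
  have h2 : Integrable (fun ω => b * Y ω) (κ x) := (hIntY x).const_mul b
  have h3 : Integrable (fun ω => c * W ω) (κ x) := (hIntW x).const_mul c
  have h4 : Integrable (fun _ : Ω => d) (κ x) := integrable_const d
  have h34 : Integrable (fun ω => c * W ω + d) (κ x) := h3.add h4
  have h234 : Integrable (fun ω => b * Y ω + (c * W ω + d)) (κ x) := h2.add h34
  rw [integral_add h1 h234, integral_add h2 h34,
    integral_add h3 h4, integral_const_mul, integral_const_mul, integral_const_mul,
    integral_const, probReal_univ]
  have hEY : ∫ ω, Y ω ∂(κ x) = pi x * mu1 x + (1 - pi x) * mu0 x := by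
    have : ∫ ω, (1 - W ω) * Y ω ∂(κ x)
        = (∫ ω, Y ω ∂(κ x)) - ∫ ω, W ω * Y ω ∂(κ x) := by
      rw [← integral_sub (hIntY x) (hIntWY x)]
      congr 1; funext ω; ring
    have h0 := hY0 x
    rw [this, hY1 x] at h0
    linarith
  rw [hEY, hY1 x, hpi x, htau x, ha, hb, hc, hd, hcorrect x]
  have hpne' : pi x ≠ 0 := by rw [← hcorrect x]; exact hpne
  have hpne1' : (1 : ℝ) - pi x ≠ 0 := by rw [← hcorrect x]; exact hpne1
  simp only [ENNReal.toReal_one, smul_eq_mul]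
  field_simp
  ring
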